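/- (Decay rate of integrated MSE under an O(1/m) approximation error, as for bounded-variation fields in the Fourier basis on [0,1].) In the binary-sensing model on D = [0,1] with inf_{x∈[0,1]} p_X(x) = ν > 0, suppose there is a constant σ > 0 such that the m-term approximation error satisfies ε[f, m] = Σ_{j=m}^∞ |⟨f, φ_j⟩|² ≤ σ/m for all m ≥ 1. Then for all m ≥ 1 and every zero-mean noise distribution supported in [−b, b], E[‖f − f̂_{n,m}‖²] ≤ c² m/(n ν) + σ/m, and with the choice m(n) = ⌈√n⌉ the integrated MSE satisfies E[‖f − f̂_{n,m(n)}‖²] = O(1/√n). -/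

import Mathlib

open MeasureTheory ProbabilityTheory Filter
open scoped ENNReal Topology
open scoped NNReal

noncomputable section

/-- Sign function: `+1` if `u > 0` and `-1` otherwise. -/
def sgn' (u : ℝ) : ℝ := if 0 < u then 1 else -1

/-- Binary-quantized observation of sensor `i`: `B i = sgn (f (X i) + Z i - T i)`. -/
def obsB {E Ω : Type*} (f : E → ℝ) (X : ℕ → Ω → E) (Z T : ℕ → Ω → ℝ)
    (i : ℕ) (ω : Ω) : ℝ :=
  sgn' (f (X i ω) + Z i ω - T i ω)

/-- Estimate of the `j`-th coefficient from the first `n` sensors: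
`α̂_j = (c/n) ∑_{i<n} (φ_j(X_i))^* / p_X(X_i) * B_i`. -/
def alphaHat {E Ω : Type*} (c : ℝ) (pX : E → ℝ) (φ : ℕ → E → ℂ) (f : E → ℝ)
    (X : ℕ → Ω → E) (Z T : ℕ → Ω → ℝ) (n j : ℕ) (ω : Ω) : ℂ :=
  ((c : ℂ) / (n : ℂ)) * ∑ i ∈ Finset.range n,
    (starRingEnd ℂ) (φ j (X i ω)) / (pX (X i ω) : ℂ) * (obsB f X Z T i ω : ℂ)

/-- The `j`-th coefficient of the field `f`: `α_j = ⟨f, φ_j⟩ = ∫_D f (φ_j)^*`. -/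
def coeff {E : Type*} [MeasureSpace E] (D : Set E) (f : E → ℝ) (φ : ℕ → E → ℂ)
    (j : ℕ) : ℂ :=
  ∫ x in D, (f x : ℂ) * (starRingEnd ℂ) (φ j x)

/-- The `m`-term field estimate `f̂_{n,m} = ∑_{j<m} α̂_j φ_j`. -/
def fieldEst {E Ω : Type*} (c : ℝ) (pX : E → ℝ) (φ : ℕ → E → ℂ) (f : E → ℝ)
    (X : ℕ → Ω → E) (Z T : ℕ → Ω → ℝ) (n m : ℕ) (x : E) (ω : Ω) : ℂ :=
  ∑ j ∈ Finset.range m, alphaHat c pX φ f X Z T n j ω * φ j x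

/-- The `m`-term approximation `f_m = ∑_{j<m} α_j φ_j`. -/
def mApprox {E : Type*} [MeasureSpace E] (D : Set E) (f : E → ℝ) (φ : ℕ → E → ℂ)
    (m : ℕ) (x : E) : ℂ :=
  ∑ j ∈ Finset.range m, coeff D f φ j * φ j x

/-- The integrated mean squared error `E[‖f - f̂_{n,m}‖²]`. -/
def intMSE {E Ω : Type*} [MeasureSpace E] [MeasurableSpace Ω] (P : Measure Ω)
    (D : Set E) (c : ℝ) (pX : E → ℝ) (φ : ℕ → E → ℂ) (f : E → ℝ)
    (X : ℕ → Ω → E) (Z T : ℕ → Ω → ℝ) (n m : ℕ) : ℝ :=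
  ∫ ω, (∫ x in D, ‖(f x : ℂ) - fieldEst c pX φ f X Z T n m x ω‖ ^ 2) ∂P

/-- The `m`-term approximation error `ε[f,m] = ∑_{j≥m} |α_j|²`. -/
def tailErr {E : Type*} [MeasureSpace E] (D : Set E) (f : E → ℝ) (φ : ℕ → E → ℂ)
    (m : ℕ) : ℝ :=
  ∑' j : ℕ, ‖coeff D f φ (m + j)‖ ^ 2

/-- The deployment distribution: density `p_X` (w.r.t. Lebesgue measure) on `D`. -/
def deployLaw {E : Type*} [MeasureSpace E] (D : Set E) (pX : E → ℝ) : Measure E :=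
  (volume.restrict D).withDensity fun x => ENNReal.ofReal (pX x)

/-- The threshold distribution: uniform on `[-c, c]`. -/
def threshLaw (c : ℝ) : Measure ℝ :=
  (ENNReal.ofReal (1 / (2 * c))) • volume.restrict (Set.Icc (-c) c)

end


noncomputable section
def gfun (pX : ℝ → ℝ) (φ : ℕ → ℝ → ℂ) (f : ℝ → ℝ) (j : ℕ) (p : ℝ × ℝ × ℝ) : ℂ :=
  (starRingEnd ℂ) (φ j p.1) / (pX p.1 : ℂ) * (sgn' (f p.1 + p.2.1 - p.2.2) : ℂ)
end

lemma sgn'_measurable : Measurable sgn' := by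
  unfold sgn'
  exact Measurable.ite measurableSet_Ioi measurable_const measurable_const

lemma sgn'_abs (u : ℝ) : |sgn' u| = 1 := by
  unfold sgn'; split <;> simp

lemma sgn'_norm (u : ℝ) : ‖sgn' u‖ = 1 := by rw [Real.norm_eq_abs, sgn'_abs]

lemma deployLaw_prob {D : Set ℝ} (hD : MeasurableSet D) {pX : ℝ → ℝ}
    (hm : Measurable pX) (hpos : ∀ x ∈ D, 0 < pX x) (hone : (∫ x in D, pX x) = 1) :
    IsProbabilityMeasure (deployLaw D pX) := by
  have hint : Integrable pX (volume.restrict D) := by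
    by_contra h
    rw [integral_undef h] at hone
    norm_num at hone
  constructor
  rw [deployLaw, withDensity_apply _ MeasurableSet.univ, Measure.restrict_univ,
    ← ofReal_integral_eq_lintegral_ofReal hint ?_, hone]
  · simp
  · filter_upwards [ae_restrict_mem hD] with x hx using (hpos x hx).le

lemma gfun_meas {pX : ℝ → ℝ} {φ : ℕ → ℝ → ℂ} {f : ℝ → ℝ} {j : ℕ}
    (hpX : Measurable pX) (hφ : Measurable (φ j)) (hf : Measurable f) :
    Measurable (gfun pX φ f j) := by
  unfold gfun
  have h1 : Measurable fun p : ℝ × ℝ × ℝ => (starRingEnd ℂ) (φ j p.1) :=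
    (Complex.continuous_conj.measurable).comp (hφ.comp measurable_fst)
  have h2 : Measurable fun p : ℝ × ℝ × ℝ => ((pX p.1 : ℝ) : ℂ) :=
    Complex.measurable_ofReal.comp (hpX.comp measurable_fst)
  have h3 : Measurable fun p : ℝ × ℝ × ℝ => ((sgn' (f p.1 + p.2.1 - p.2.2) : ℝ) : ℂ) := by
    apply Complex.measurable_ofReal.comp
    apply sgn'_measurable.comp
    exact ((hf.comp measurable_fst).add (measurable_fst.comp measurable_snd)).sub
      (measurable_snd.comp measurable_snd)
  exact (h1.div h2).mul h3

lemma gfun_enorm_sq (pX : ℝ → ℝ) (φ : ℕ → ℝ → ℂ) (f : ℝ → ℝ) (j : ℕ) (p : ℝ × ℝ × ℝ) :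
    ((‖gfun pX φ f j p‖₊ : ℝ≥0∞)) ^ 2 = ENNReal.ofReal ((‖φ j p.1‖ / |pX p.1|) ^ 2) := by
  have hn : ‖gfun pX φ f j p‖ = ‖φ j p.1‖ / |pX p.1| := by
    simp [gfun, norm_mul, norm_div, RCLike.norm_conj, Complex.norm_real, Real.norm_eq_abs,
      sgn'_abs]
  rw [← enorm_eq_nnnorm, ← ofReal_norm, ← ENNReal.ofReal_pow (norm_nonneg _), hn]

lemma gfun_lintegral_le {D : Set ℝ} (hD : MeasurableSet D) {pX : ℝ → ℝ} {φ : ℕ → ℝ → ℂ}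
    {f : ℝ → ℝ} {j : ℕ} {ν : ℝ} (hν : 0 < ν) (hνle : ∀ x ∈ D, ν ≤ pX x)
    (hpX : Measurable pX) (hφm : Measurable (φ j)) (hf : Measurable f)
    (hφ1 : (∫ x in D, ‖φ j x‖ ^ 2) = 1)
    (hφint : Integrable (fun x => ‖φ j x‖ ^ 2) (volume.restrict D))
    (ρ : Measure (ℝ × ℝ)) [IsProbabilityMeasure ρ] :
    ∫⁻ p, ((‖gfun pX φ f j p‖₊ : ℝ≥0∞)) ^ 2 ∂((deployLaw D pX).prod ρ) ≤
      ENNReal.ofReal (1 / ν) := by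
  have hFmeas : Measurable fun x : ℝ => ENNReal.ofReal ((‖φ j x‖ / |pX x|) ^ 2) :=
    (((hφm.norm).div (hpX.abs)).pow_const 2).ennreal_ofReal
  calc ∫⁻ p, ((‖gfun pX φ f j p‖₊ : ℝ≥0∞)) ^ 2 ∂((deployLaw D pX).prod ρ)
      = ∫⁻ p, ENNReal.ofReal ((‖φ j p.1‖ / |pX p.1|) ^ 2) ∂((deployLaw D pX).prod ρ) := by
        simp_rw [gfun_enorm_sq]
    _ = ∫⁻ x, ∫⁻ _y, ENNReal.ofReal ((‖φ j x‖ / |pX x|) ^ 2) ∂ρ ∂(deployLaw D pX) :=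
        lintegral_prod _ (hFmeas.comp measurable_fst).aemeasurable
    _ = ∫⁻ x, ENNReal.ofReal ((‖φ j x‖ / |pX x|) ^ 2) ∂(deployLaw D pX) := by
        simp [lintegral_const]
    _ = ∫⁻ x in D, ((fun x => ENNReal.ofReal (pX x)) *
          fun x => ENNReal.ofReal ((‖φ j x‖ / |pX x|) ^ 2)) x ∂volume := by
        rw [deployLaw, lintegral_withDensity_eq_lintegral_mul _ hpX.ennreal_ofReal hFmeas]
    _ ≤ ∫⁻ x in D, ENNReal.ofReal (‖φ j x‖ ^ 2 * (1 / ν)) ∂volume := by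
        apply setLIntegral_mono' hD
        intro x hx
        have hp : 0 < pX x := lt_of_lt_of_le hν (hνle x hx)
        simp only [Pi.mul_apply]
        rw [← ENNReal.ofReal_mul (le_of_lt hp)]
        apply ENNReal.ofReal_le_ofReal
        rw [abs_of_pos hp, div_pow]
        have h1 : pX x * (‖φ j x‖ ^ 2 / pX x ^ 2) = ‖φ j x‖ ^ 2 / pX x := by
          field_simp
        rw [h1, mul_one_div]
        exact div_le_div_of_nonneg_left (sq_nonneg _) hν (hνle x hx)
    _ = (∫⁻ x in D, ENNReal.ofReal (‖φ j x‖ ^ 2) ∂volume) * ENNReal.ofReal (1 / ν) := by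
        simp_rw [ENNReal.ofReal_mul (sq_nonneg _)]
        exact lintegral_mul_const _ ((hφm.norm.pow_const 2).ennreal_ofReal)
    _ = ENNReal.ofReal (1 / ν) := by
        rw [← ofReal_integral_eq_lintegral_ofReal hφint
          (Eventually.of_forall fun x => sq_nonneg _), hφ1]
        simp

lemma memℒp_two_of_lintegral {α : Type*} [MeasurableSpace α] {μ : Measure α} {h : α → ℂ}
    (hm : AEStronglyMeasurable h μ) (hfin : ∫⁻ p, ((‖h p‖₊ : ℝ≥0∞)) ^ 2 ∂μ < ∞) :
    MemLp h 2 μ := by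
  refine ⟨hm, ?_⟩
  rw [eLpNorm_eq_lintegral_rpow_enorm_toReal two_ne_zero ENNReal.ofNat_ne_top]
  apply ENNReal.rpow_lt_top_of_nonneg (by norm_num)
  simp only [ENNReal.toReal_ofNat]
  have : ∀ x : ℝ≥0∞, x ^ (2 : ℝ) = x ^ (2 : ℕ) := fun x => by
    rw [← ENNReal.rpow_natCast]; norm_num
  simp_rw [this]
  exact hfin.ne

lemma integral_norm_sq_le {α : Type*} [MeasurableSpace α] {μ : Measure α} {h : α → ℂ} {M : ℝ}
    (hm : AEStronglyMeasurable h μ) (hM : 0 ≤ M)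
    (hle : ∫⁻ p, ((‖h p‖₊ : ℝ≥0∞)) ^ 2 ∂μ ≤ ENNReal.ofReal M) :
    ∫ p, ‖h p‖ ^ 2 ∂μ ≤ M := by
  rw [integral_eq_lintegral_of_nonneg_ae (Eventually.of_forall fun x => sq_nonneg _)
    (hm.norm.pow 2)]
  · calc (∫⁻ p, ENNReal.ofReal (‖h p‖ ^ 2) ∂μ).toReal
        ≤ (ENNReal.ofReal M).toReal := by
          apply ENNReal.toReal_mono ENNReal.ofReal_ne_top
          refine le_trans (le_of_eq ?_) hle
          congr 1
          ext p
          rw [← enorm_eq_nnnorm, ← ofReal_norm, ← ENNReal.ofReal_pow (norm_nonneg _)]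
      _ = M := ENNReal.toReal_ofReal hM

lemma integrable_mul_L2 {α : Type*} [MeasurableSpace α] {μ : Measure α} {h k : α → ℂ}
    (hh : MemLp h 2 μ) (hk : MemLp k 2 μ) : Integrable (fun x => h x * k x) μ := by
  have hbd : ∀ x, ‖h x * k x‖ ≤ (1/2) * (‖h x‖ ^ 2 + ‖k x‖ ^ 2) := by
    intro x
    rw [norm_mul]
    nlinarith [sq_nonneg (‖h x‖ - ‖k x‖), norm_nonneg (h x), norm_nonneg (k x)]
  have hint : Integrable (fun x => (1/2) * (‖h x‖ ^ 2 + ‖k x‖ ^ 2)) μ := by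
    exact (((memLp_two_iff_integrable_sq_norm hh.1).mp hh).add
      ((memLp_two_iff_integrable_sq_norm hk.1).mp hk)).const_mul _
  exact Integrable.mono' hint (hh.1.mul hk.1) (Eventually.of_forall hbd)

lemma integrable_norm_sq_of_memℒp {α : Type*} [MeasurableSpace α] {μ : Measure α} {h : α → ℂ}
    (hh : MemLp h 2 μ) : Integrable (fun x => ‖h x‖ ^ 2) μ :=
  (memLp_two_iff_integrable_sq_norm hh.1).mp hh

lemma threshLaw_prob {c : ℝ} (hc : 0 < c) : IsProbabilityMeasure (threshLaw c) := by
  constructor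
  rw [threshLaw]
  rw [Measure.smul_apply, Measure.restrict_apply MeasurableSet.univ, Set.univ_inter,
    Real.volume_Icc]
  rw [smul_eq_mul, ← ENNReal.ofReal_mul (by positivity)]
  rw [show (1 / (2 * c)) * (c - -c) = 1 by field_simp; ring]
  simp

lemma integral_sgn'_threshLaw {c u : ℝ} (hc : 0 < c) (hu : u ∈ Set.Icc (-c) c) :
    ∫ t, sgn' (u - t) ∂(threshLaw c) = u / c := by
  obtain ⟨h1, h2⟩ := hu
  have key : ∫ t in Set.Icc (-c) c, sgn' (u - t) = 2 * u := by
    rw [← Set.Ico_union_Icc_eq_Icc h1 h2]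
    have hd : Disjoint (Set.Ico (-c) u) (Set.Icc u c) := by
      apply Set.disjoint_left.2
      rintro t ⟨_, ht2⟩ ⟨ht3, _⟩; exact absurd ht3 (not_le.2 ht2)
    have e1 : Set.EqOn (fun t => sgn' (u - t)) (fun _ => (1:ℝ)) (Set.Ico (-c) u) := by
      intro t ht; simp only [sgn']; rw [if_pos (by linarith [ht.2])]
    have e2 : Set.EqOn (fun t => sgn' (u - t)) (fun _ => (-1:ℝ)) (Set.Icc u c) := by
      intro t ht; simp only [sgn']; rw [if_neg (by push_neg; linarith [ht.1])]
    rw [setIntegral_union hd measurableSet_Icc]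
    · rw [setIntegral_congr_fun measurableSet_Ico e1,
        setIntegral_congr_fun measurableSet_Icc e2]
      simp [Real.volume_Ico, Real.volume_Icc, ENNReal.toReal_ofReal, sub_nonneg.2 h1,
        sub_nonneg.2 h2]
      rw [max_eq_left (by linarith)]
      ring
    · exact (integrableOn_congr_fun e1 measurableSet_Ico).2 (integrableOn_const (by
        rw [Real.volume_Ico]; exact ENNReal.ofReal_ne_top))
    · exact (integrableOn_congr_fun e2 measurableSet_Icc).2 (integrableOn_const (by
        rw [Real.volume_Icc]; exact ENNReal.ofReal_ne_top))
  rw [threshLaw, integral_smul_measure, key]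
  rw [ENNReal.toReal_ofReal (by positivity)]
  simp only [smul_eq_mul]
  field_simp

lemma gfun_integral {D : Set ℝ} (hD : MeasurableSet D) {a b c : ℝ}
    (ha : 0 < a) (hb : 0 < b) (hc : c = a + b)
    {f pX : ℝ → ℝ} (hfmeas : Measurable f) (hfbd : ∀ x ∈ D, f x ∈ Set.Icc (-a) a)
    (hpX : Measurable pX) (hpos : ∀ x ∈ D, 0 < pX x)
    {φ : ℕ → ℝ → ℂ} {j : ℕ} (hφm : Measurable (φ j))
    (μZ : Measure ℝ) [IsProbabilityMeasure μZ] [IsProbabilityMeasure (deployLaw D pX)]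
    (hZmean : (∫ z, z ∂μZ) = 0) (hZsupp : μZ (Set.Icc (-b) b)ᶜ = 0)
    (hint : Integrable (gfun pX φ f j) ((deployLaw D pX).prod (μZ.prod (threshLaw c)))) :
    ∫ p, gfun pX φ f j p ∂((deployLaw D pX).prod (μZ.prod (threshLaw c)))
      = (∫ x in D, (f x : ℂ) * (starRingEnd ℂ) (φ j x)) / c := by
  have hc0 : 0 < c := by linarith
  haveI := threshLaw_prob hc0
  have haeZ : ∀ᵐ z ∂μZ, z ∈ Set.Icc (-b) b := ae_iff.2 hZsupp
  have hzint : Integrable (fun z : ℝ => z) μZ := by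
    refine Integrable.mono' (integrable_const b) measurable_id.aestronglyMeasurable ?_
    filter_upwards [haeZ] with z hz
    rw [Real.norm_eq_abs, abs_le]
    exact ⟨hz.1, hz.2⟩
  rw [integral_prod _ hint]
  have haeD : ∀ᵐ x ∂(deployLaw D pX), x ∈ D :=
    (withDensity_absolutelyContinuous _ _).ae_le (ae_restrict_mem hD)
  have hcongr : ∫ x, (∫ y, gfun pX φ f j (x, y) ∂(μZ.prod (threshLaw c))) ∂(deployLaw D pX)
      = ∫ x, (starRingEnd ℂ) (φ j x) / (pX x : ℂ) * ((f x / c : ℝ) : ℂ)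
        ∂(deployLaw D pX) := by
    apply integral_congr_ae
    filter_upwards [haeD] with x hx
    have hsmeas : Measurable (fun y : ℝ × ℝ => sgn' (f x + y.1 - y.2)) :=
      sgn'_measurable.comp ((measurable_const.add measurable_fst).sub measurable_snd)
    have hsint : Integrable (fun y : ℝ × ℝ => sgn' (f x + y.1 - y.2)) (μZ.prod (threshLaw c)) := by
      refine Integrable.mono' (integrable_const 1) hsmeas.aestronglyMeasurable ?_
      exact Eventually.of_forall fun y => le_of_eq (sgn'_norm _)
    have step1 : ∫ y, gfun pX φ f j (x, y) ∂(μZ.prod (threshLaw c))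
        = (starRingEnd ℂ) (φ j x) / (pX x : ℂ) *
          ((∫ y : ℝ × ℝ, sgn' (f x + y.1 - y.2) ∂(μZ.prod (threshLaw c)) : ℝ) : ℂ) := by
      rw [show (fun y : ℝ × ℝ => gfun pX φ f j (x, y)) = fun y : ℝ × ℝ =>
        (starRingEnd ℂ) (φ j x) / (pX x : ℂ) * ((sgn' (f x + y.1 - y.2) : ℝ) : ℂ) from rfl]
      rw [integral_const_mul]
      congr 1
      exact integral_ofReal
    rw [step1]
    congr 2
    rw [integral_prod _ hsint]
    have inner : ∀ᵐ z ∂μZ, (∫ t, sgn' (f x + z - t) ∂(threshLaw c)) = (f x + z) / c := by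
      filter_upwards [haeZ] with z hz
      apply integral_sgn'_threshLaw hc0
      obtain ⟨hf1, hf2⟩ := hfbd x hx
      constructor <;> [linarith [hz.1]; linarith [hz.2]]
    rw [integral_congr_ae inner]
    rw [show (fun z : ℝ => (f x + z) / c) = fun z : ℝ => f x / c + z * c⁻¹ by
      funext z; ring]
    rw [integral_add (integrable_const _) (hzint.mul_const _), integral_const,
      integral_mul_const, hZmean, probReal_univ]
    simp
  rw [hcongr, deployLaw]
  have hmt : Measurable fun x : ℝ => Real.toNNReal (pX x) := measurable_real_toNNReal.comp hpX
  rw [show (fun x : ℝ => ENNReal.ofReal (pX x))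
      = fun x : ℝ => ((Real.toNNReal (pX x) : ℝ≥0) : ℝ≥0∞) from rfl]
  rw [integral_withDensity_eq_integral_smul hmt _]
  rw [← integral_div]
  apply setIntegral_congr_fun hD
  intro x hx
  have hp : 0 < pX x := hpos x hx
  have hpc : (pX x : ℂ) ≠ 0 := by
    simpa using ne_of_gt hp
  simp only [NNReal.smul_def, Real.coe_toNNReal _ hp.le, Complex.real_smul]
  push_cast
  field_simp

/-- **Decay rate of the integrated MSE under an `O(1/m)` approximation error
(Corollary 4, bounded-variation fields on `[0,1]`):**
`E[‖f − f̂_(n,m)‖²] ≤ c² m/(n ν) + σ/m`, and for `m(n) = ⌈√n⌉` the MSE is `O(1/√n)`. -/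
theorem stmt17
    {D : Set ℝ} (hD : D = Set.Icc (0 : ℝ) 1)
    {a b c : ℝ} (ha : 0 < a) (hb : 0 < b) (hc : c = a + b)
    {f : ℝ → ℝ} (hfmeas : Measurable f)
    (hfbd : ∀ x ∈ D, f x ∈ Set.Icc (-a) a)
    {pX : ℝ → ℝ} (hpXmeas : Measurable pX)
    (hpXpos : ∀ x ∈ D, 0 < pX x) (hpXone : (∫ x in D, pX x) = 1)
    {φ : ℕ → ℝ → ℂ} (hφmeas : ∀ j, Measurable (φ j))
    (hφL2 : ∀ j, MemLp (φ j) 2 (volume.restrict D))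
    (hON : ∀ j k, (∫ x in D, φ j x * (starRingEnd ℂ) (φ k x)) = if j = k then 1 else 0)
    (hComplete : ∀ g : ℝ → ℂ, Measurable g → MemLp g 2 (volume.restrict D) →
      (∑' j : ℕ, ‖∫ x in D, g x * (starRingEnd ℂ) (φ j x)‖ ^ 2) = ∫ x in D, ‖g x‖ ^ 2)
    {Ω : Type*} [MeasurableSpace Ω] (P : Measure Ω) [IsProbabilityMeasure P]
    (X : ℕ → Ω → ℝ) (Z T : ℕ → Ω → ℝ)
    (hXmeas : ∀ i, Measurable (X i)) (hZmeas : ∀ i, Measurable (Z i))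
    (hTmeas : ∀ i, Measurable (T i))
    (μZ : Measure ℝ) [IsProbabilityMeasure μZ]
    (hZmean : (∫ z, z ∂μZ) = 0) (hZsupp : μZ (Set.Icc (-b) b)ᶜ = 0)
    (hlaw : ∀ i, Measure.map (fun ω => (X i ω, Z i ω, T i ω)) P =
      (deployLaw D pX).prod (μZ.prod (threshLaw c)))
    (hiid : iIndepFun (fun i ω => (X i ω, Z i ω, T i ω)) P)
    {ν : ℝ} (hν : 0 < ν) (hνinf : ∀ x ∈ D, ν ≤ pX x)
    {σ : ℝ} (hσ : 0 < σ)
    (happrox : ∀ m : ℕ, 1 ≤ m → tailErr D f φ m ≤ σ / m) :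
    (∀ n m : ℕ, 0 < n → 1 ≤ m →
      intMSE P D c pX φ f X Z T n m ≤ c ^ 2 * m / (n * ν) + σ / m)
    ∧ ∃ K : ℝ, ∀ n : ℕ, 0 < n →
        intMSE P D c pX φ f X Z T n ⌈Real.sqrt n⌉₊ ≤ K / Real.sqrt n := by
  have hc0 : 0 < c := by rw [hc]; linarith
  have hDmeas : MeasurableSet D := by rw [hD]; exact measurableSet_Icc
  haveI hfin : IsFiniteMeasure (volume.restrict D) := by
    constructor
    rw [Measure.restrict_apply_univ, hD, Real.volume_Icc]
    exact ENNReal.ofReal_lt_top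
  haveI hXprob : IsProbabilityMeasure (deployLaw D pX) :=
    deployLaw_prob hDmeas hpXmeas hpXpos hpXone
  haveI hTprob : IsProbabilityMeasure (threshLaw c) := threshLaw_prob hc0
  -- basic facts about the basis
  have hφnorm : ∀ j, (∫ x in D, ‖φ j x‖ ^ 2) = 1 := by
    intro j
    have h := hON j j
    rw [if_pos rfl] at h
    have hptwise : ∀ x : ℝ, φ j x * (starRingEnd ℂ) (φ j x) = ((‖φ j x‖ ^ 2 : ℝ) : ℂ) := by
      intro x
      rw [Complex.mul_conj, Complex.normSq_eq_norm_sq]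
    simp_rw [hptwise] at h
    have h2 := integral_ofReal (𝕜 := ℂ) (f := fun x => ‖φ j x‖ ^ 2) (μ := volume.restrict D)
    have h3 : ((∫ x in D, ‖φ j x‖ ^ 2 : ℝ) : ℂ) = 1 := h2.symm.trans h
    exact_mod_cast h3
  have hφsqint : ∀ j, Integrable (fun x => ‖φ j x‖ ^ 2) (volume.restrict D) :=
    fun j => ((hφL2 j).norm).integrable_sq
  have hconjL2 : ∀ k, MemLp (fun x => (starRingEnd ℂ) (φ k x)) 2 (volume.restrict D) := by
    intro k
    refine (hφL2 k).of_le
      (Complex.continuous_conj.comp_aestronglyMeasurable (hφL2 k).1) ?_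
    exact Eventually.of_forall fun x => le_of_eq (RCLike.norm_conj _)
  -- facts about the per-sensor integrand
  have hgmeas : ∀ j, Measurable (gfun pX φ f j) :=
    fun j => gfun_meas hpXmeas (hφmeas j) hfmeas
  have hglint : ∀ j, ∫⁻ p, ((‖gfun pX φ f j p‖₊ : ℝ≥0∞)) ^ 2
      ∂((deployLaw D pX).prod (μZ.prod (threshLaw c))) ≤ ENNReal.ofReal (1 / ν) :=
    fun j => gfun_lintegral_le hDmeas hν hνinf hpXmeas (hφmeas j) hfmeas (hφnorm j)
      (hφsqint j) _
  have hgL2 : ∀ j, MemLp (gfun pX φ f j) 2 ((deployLaw D pX).prod (μZ.prod (threshLaw c))) :=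
    fun j => memℒp_two_of_lintegral (hgmeas j).aestronglyMeasurable
      (lt_of_le_of_lt (hglint j) ENNReal.ofReal_lt_top)
  have hgsq : ∀ j, ∫ p, ‖gfun pX φ f j p‖ ^ 2 ∂((deployLaw D pX).prod (μZ.prod (threshLaw c)))
      ≤ 1 / ν :=
    fun j => integral_norm_sq_le (hgmeas j).aestronglyMeasurable
      (le_of_lt (one_div_pos.mpr hν)) (hglint j)
  have hgmean : ∀ j, ∫ p, gfun pX φ f j p ∂((deployLaw D pX).prod (μZ.prod (threshLaw c)))
      = coeff D f φ j / c :=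
    fun j => gfun_integral hDmeas ha hb hc hfmeas hfbd hpXmeas hpXpos (hφmeas j) μZ
      hZmean hZsupp ((hgL2 j).integrable one_le_two)
  -- transfer to the sample space
  have htup : ∀ i, Measurable (fun ω => (X i ω, Z i ω, T i ω)) :=
    fun i => (hXmeas i).prodMk ((hZmeas i).prodMk (hTmeas i))
  set Y : ℕ → ℕ → Ω → ℂ := fun j i ω => gfun pX φ f j (X i ω, Z i ω, T i ω) with hYdef
  have hYL2 : ∀ j i, MemLp (Y j i) 2 P := by
    intro j i
    have h := hgL2 j
    rw [← hlaw i] at h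
    exact (memLp_map_measure_iff (hgmeas j).aestronglyMeasurable
      (htup i).aemeasurable).mp h
  have hYmean : ∀ j i, ∫ ω, Y j i ω ∂P = coeff D f φ j / c := by
    intro j i
    have h : ∫ ω, Y j i ω ∂P
        = ∫ p, gfun pX φ f j p ∂(Measure.map (fun ω => (X i ω, Z i ω, T i ω)) P) :=
      (integral_map (htup i).aemeasurable (hgmeas j).aestronglyMeasurable).symm
    rw [h, hlaw i, hgmean j]
  have hYsq : ∀ j i, ∫ ω, ‖Y j i ω‖ ^ 2 ∂P ≤ 1 / ν := by
    intro j i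
    have h : ∫ ω, ‖Y j i ω‖ ^ 2 ∂P
        = ∫ p, ‖gfun pX φ f j p‖ ^ 2 ∂(Measure.map (fun ω => (X i ω, Z i ω, T i ω)) P) :=
      (integral_map (htup i).aemeasurable
        (((hgmeas j).norm.pow_const 2).aestronglyMeasurable)).symm
    rw [h, hlaw i]
    exact hgsq j
  have hαY : ∀ n j ω, alphaHat c pX φ f X Z T n j ω
      = ((c : ℂ) / (n : ℂ)) * ∑ i ∈ Finset.range n, Y j i ω := fun n j ω => rfl
  have hαL2 : ∀ n j, MemLp (alphaHat c pX φ f X Z T n j) 2 P := by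
    intro n j
    have h : MemLp (fun ω => ((c : ℂ) / (n : ℂ)) * ∑ i ∈ Finset.range n, Y j i ω) 2 P :=
      (memLp_finset_sum (Finset.range n) (fun i _ => hYL2 j i)).const_mul _
    exact h
  -- the per-coefficient variance bound
  have Ebound : ∀ n j, 0 < n →
      ∫ ω, ‖coeff D f φ j - alphaHat c pX φ f X Z T n j ω‖ ^ 2 ∂P ≤ c ^ 2 / (n * ν) := by
    intro n j hn
    have hnR : (0:ℝ) < n := by exact_mod_cast hn
    have hnC : ((n:ℂ)) ≠ 0 := by exact_mod_cast ne_of_gt hnR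
    have hcC : ((c:ℂ)) ≠ 0 := by exact_mod_cast ne_of_gt hc0
    set W : Ω → ℂ := fun ω => ∑ i ∈ Finset.range n, Y j i ω with hWdef
    have hWL2 : MemLp W 2 P := memLp_finset_sum (Finset.range n) (fun i _ => hYL2 j i)
    have hWint : Integrable W P := hWL2.integrable one_le_two
    set Wr : Ω → ℝ := fun ω => (W ω).re with hWrdef
    set Wi : Ω → ℝ := fun ω => (W ω).im with hWidef
    have hWrL2 : MemLp Wr 2 P := by simpa using hWL2.re
    have hWiL2 : MemLp Wi 2 P := by simpa using hWL2.im
    have hEW : ∫ ω, W ω ∂P = (n : ℂ) * (coeff D f φ j / c) := by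
      rw [hWdef]
      rw [integral_finset_sum _ (fun i _ => (hYL2 j i).integrable one_le_two)]
      simp [hYmean j, Finset.sum_const, Finset.card_range, nsmul_eq_mul]
    have hEWr : ∫ ω, Wr ω ∂P = ((n : ℂ) * (coeff D f φ j / c)).re := by
      rw [← hEW]
      simpa using integral_re hWint
    have hEWi : ∫ ω, Wi ω ∂P = ((n : ℂ) * (coeff D f φ j / c)).im := by
      rw [← hEW]
      simpa using integral_im hWint
    -- variance bounds for the real and imaginary parts
    have hRL2 : ∀ i, MemLp (fun ω => (Y j i ω).re) 2 P := fun i => by simpa using (hYL2 j i).re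
    have hIL2 : ∀ i, MemLp (fun ω => (Y j i ω).im) 2 P := fun i => by simpa using (hYL2 j i).im
    have hRind : iIndepFun (fun i ω => (Y j i ω).re) P :=
      hiid.comp (fun _ p => (gfun pX φ f j p).re)
        (fun _ => Complex.measurable_re.comp (hgmeas j))
    have hIind : iIndepFun (fun i ω => (Y j i ω).im) P :=
      hiid.comp (fun _ p => (gfun pX φ f j p).im)
        (fun _ => Complex.measurable_im.comp (hgmeas j))
    have hvarR : variance Wr P ≤ ∑ i ∈ Finset.range n, ∫ ω, ((Y j i ω).re) ^ 2 ∂P := by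
      have hfun : Wr = ∑ i ∈ Finset.range n, (fun ω => (Y j i ω).re) := by
        funext ω
        simp [hWrdef, hWdef, Complex.re_sum]
      rw [hfun, IndepFun.variance_sum (fun i _ => hRL2 i)
        (fun i _ k _ hik => hRind.indepFun hik)]
      apply Finset.sum_le_sum
      intro i _
      simpa using variance_le_expectation_sq (hRL2 i).1
    have hvarI : variance Wi P ≤ ∑ i ∈ Finset.range n, ∫ ω, ((Y j i ω).im) ^ 2 ∂P := by
      have hfun : Wi = ∑ i ∈ Finset.range n, (fun ω => (Y j i ω).im) := by
        funext ω
        simp [hWidef, hWdef, Complex.im_sum]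
      rw [hfun, IndepFun.variance_sum (fun i _ => hIL2 i)
        (fun i _ k _ hik => hIind.indepFun hik)]
      apply Finset.sum_le_sum
      intro i _
      simpa using variance_le_expectation_sq (hIL2 i).1
    have hsum : variance Wr P + variance Wi P ≤ n * (1 / ν) := by
      refine le_trans (add_le_add hvarR hvarI) ?_
      rw [← Finset.sum_add_distrib]
      calc ∑ i ∈ Finset.range n, (∫ ω, ((Y j i ω).re) ^ 2 ∂P + ∫ ω, ((Y j i ω).im) ^ 2 ∂P)
          ≤ ∑ _i ∈ Finset.range n, (1 / ν) := by
            apply Finset.sum_le_sum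
            intro i _
            rw [← integral_add (hRL2 i).integrable_sq (hIL2 i).integrable_sq]
            refine le_trans (le_of_eq (integral_congr_ae (Eventually.of_forall fun ω => ?_)))
              (hYsq j i)
            rw [Complex.sq_norm, Complex.normSq_apply]
            ring
        _ = n * (1 / ν) := by
            rw [Finset.sum_const, Finset.card_range, nsmul_eq_mul]
    -- pointwise identity for the squared error
    have hpoint : ∀ ω, ‖coeff D f φ j - alphaHat c pX φ f X Z T n j ω‖ ^ 2
        = (c / n) ^ 2 * ((Wr ω - ∫ ω', Wr ω' ∂P) ^ 2 + (Wi ω - ∫ ω', Wi ω' ∂P) ^ 2) := by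
      intro ω
      have h1 : coeff D f φ j - alphaHat c pX φ f X Z T n j ω
          = ((c / n : ℝ) : ℂ) * ((n : ℂ) * (coeff D f φ j / c) - W ω) := by
        rw [hαY n j ω]
        have hWω : (∑ i ∈ Finset.range n, Y j i ω) = W ω := rfl
        rw [hWω]
        push_cast
        field_simp
      rw [h1, norm_mul, mul_pow, Complex.norm_real, Real.norm_eq_abs, sq_abs]
      congr 1
      rw [Complex.sq_norm, Complex.normSq_apply, Complex.sub_re,
        Complex.sub_im, hEWr, hEWi]
      ring
    calc ∫ ω, ‖coeff D f φ j - alphaHat c pX φ f X Z T n j ω‖ ^ 2 ∂P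
        = (c / n) ^ 2 * ∫ ω, ((Wr ω - ∫ ω', Wr ω' ∂P) ^ 2 + (Wi ω - ∫ ω', Wi ω' ∂P) ^ 2) ∂P := by
          simp_rw [hpoint]
          exact integral_const_mul _ _
      _ = (c / n) ^ 2 * (variance Wr P + variance Wi P) := by
          congr 1
          have i1 : Integrable (fun ω => (Wr ω - ∫ ω', Wr ω' ∂P) ^ 2) P := by
            simpa [Pi.sub_apply] using
              (hWrL2.sub (memLp_const (∫ ω', Wr ω' ∂P))).integrable_sq
          have i2 : Integrable (fun ω => (Wi ω - ∫ ω', Wi ω' ∂P) ^ 2) P := by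
            simpa [Pi.sub_apply] using
              (hWiL2.sub (memLp_const (∫ ω', Wi ω' ∂P))).integrable_sq
          rw [integral_add i1 i2]
          congr 1
          · rw [variance_eq_integral hWrL2.1.aemeasurable]
          · rw [variance_eq_integral hWiL2.1.aemeasurable]
      _ ≤ (c / n) ^ 2 * (n * (1 / ν)) :=
          mul_le_mul_of_nonneg_left hsum (sq_nonneg _)
      _ = c ^ 2 / (n * ν) := by
          field_simp

  -- pointwise (in ω) Parseval bound
  have hpar : ∀ n m : ℕ, ∀ ω : Ω,
      (∫ x in D, ‖(f x : ℂ) - fieldEst c pX φ f X Z T n m x ω‖ ^ 2)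
        ≤ (∑ j ∈ Finset.range m, ‖coeff D f φ j - alphaHat c pX φ f X Z T n j ω‖ ^ 2)
          + tailErr D f φ m := by
    intro n m ω
    set G : ℝ → ℂ := fun x => (f x : ℂ) - fieldEst c pX φ f X Z T n m x ω with hGdef
    have hGmeas : Measurable G := by
      apply (Complex.measurable_ofReal.comp hfmeas).sub
      exact Finset.measurable_sum _ (fun j _ => (measurable_const.mul (hφmeas j)))
    have hfMem : MemLp (fun x => (f x : ℂ)) 2 (volume.restrict D) := by
      refine MemLp.of_bound
        ((Complex.measurable_ofReal.comp hfmeas).aestronglyMeasurable) a ?_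
      filter_upwards [ae_restrict_mem hDmeas] with x hx
      rw [Complex.norm_real, Real.norm_eq_abs, abs_le]
      exact ⟨(hfbd x hx).1, (hfbd x hx).2⟩
    have hEstMem : MemLp (fun x => fieldEst c pX φ f X Z T n m x ω) 2 (volume.restrict D) := by
      apply memLp_finset_sum (Finset.range m)
      intro j _
      exact (hφL2 j).const_mul _
    have hGMem : MemLp G 2 (volume.restrict D) := hfMem.sub hEstMem
    have hcoefG : ∀ k, (∫ x in D, G x * (starRingEnd ℂ) (φ k x))
        = coeff D f φ k - (if k < m then alphaHat c pX φ f X Z T n k ω else 0) := by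
      intro k
      have hint1 : Integrable (fun x => (f x : ℂ) * (starRingEnd ℂ) (φ k x))
          (volume.restrict D) := integrable_mul_L2 hfMem (hconjL2 k)
      have hint2 : ∀ l, Integrable
          (fun x => alphaHat c pX φ f X Z T n l ω * φ l x * (starRingEnd ℂ) (φ k x))
          (volume.restrict D) := by
        intro l
        have := (integrable_mul_L2 (hφL2 l) (hconjL2 k)).const_mul
          (alphaHat c pX φ f X Z T n l ω)
        simpa [mul_assoc] using this
      have hsplit : (fun x => G x * (starRingEnd ℂ) (φ k x))
          = fun x => (f x : ℂ) * (starRingEnd ℂ) (φ k x)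
            - ∑ l ∈ Finset.range m,
              alphaHat c pX φ f X Z T n l ω * φ l x * (starRingEnd ℂ) (φ k x) := by
        funext x
        rw [hGdef]
        simp only [fieldEst, sub_mul, Finset.sum_mul]
      rw [hsplit, integral_sub hint1 (integrable_finset_sum _ (fun l _ => hint2 l))]
      congr 1
      rw [integral_finset_sum _ (fun l _ => hint2 l)]
      have hterm : ∀ l, (∫ x in D,
          alphaHat c pX φ f X Z T n l ω * φ l x * (starRingEnd ℂ) (φ k x))
          = alphaHat c pX φ f X Z T n l ω * (if l = k then 1 else 0) := by
        intro l
        simp_rw [mul_assoc]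
        rw [integral_const_mul, hON l k]
      simp_rw [hterm]
      simp only [mul_ite, mul_one, mul_zero]
      rw [Finset.sum_ite_eq' (Finset.range m) k]
      simp [Finset.mem_range]
    have hpars := hComplete G hGmeas hGMem
    by_cases hsum : Summable (fun k => ‖∫ x in D, G x * (starRingEnd ℂ) (φ k x)‖ ^ 2)
    · rw [← hpars, ← Summable.sum_add_tsum_nat_add m hsum]
      apply add_le_add
      · apply le_of_eq
        apply Finset.sum_congr rfl
        intro k hk
        rw [hcoefG k, if_pos (Finset.mem_range.mp hk)]
      · apply le_of_eq
        apply tsum_congr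
        intro k
        rw [show k + m = m + k from Nat.add_comm k m, hcoefG (m + k), if_neg (by omega),
          sub_zero]
    · rw [← hpars, tsum_eq_zero_of_not_summable hsum]
      apply add_nonneg
      · exact Finset.sum_nonneg fun j _ => sq_nonneg _
      · exact tsum_nonneg fun k => sq_nonneg _

  -- Part 1
  have part1 : ∀ n m : ℕ, 0 < n → 1 ≤ m →
      intMSE P D c pX φ f X Z T n m ≤ c ^ 2 * m / (n * ν) + σ / m := by
    intro n m hn hm
    have hsqint : ∀ j, Integrable
        (fun ω => ‖coeff D f φ j - alphaHat c pX φ f X Z T n j ω‖ ^ 2) P :=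
      fun j => integrable_norm_sq_of_memℒp ((memLp_const _).sub (hαL2 n j))
    calc intMSE P D c pX φ f X Z T n m
        = ∫ ω, (∫ x in D, ‖(f x : ℂ) - fieldEst c pX φ f X Z T n m x ω‖ ^ 2) ∂P := rfl
      _ ≤ ∫ ω, ((∑ j ∈ Finset.range m,
            ‖coeff D f φ j - alphaHat c pX φ f X Z T n j ω‖ ^ 2) + tailErr D f φ m) ∂P :=
          integral_mono_of_nonneg
            (Eventually.of_forall fun ω => integral_nonneg fun x => sq_nonneg _)
            ((integrable_finset_sum _ (fun j _ => hsqint j)).add (integrable_const _))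
            (Eventually.of_forall (hpar n m))
      _ = (∑ j ∈ Finset.range m,
            ∫ ω, ‖coeff D f φ j - alphaHat c pX φ f X Z T n j ω‖ ^ 2 ∂P)
            + tailErr D f φ m := by
          rw [integral_add (integrable_finset_sum _ (fun j _ => hsqint j)) (integrable_const _),
            integral_finset_sum _ (fun j _ => hsqint j), integral_const]
          simp
      _ ≤ (∑ _j ∈ Finset.range m, c ^ 2 / (n * ν)) + σ / m :=
          add_le_add (Finset.sum_le_sum fun j _ => Ebound n j hn) (happrox m hm)
      _ = c ^ 2 * m / (n * ν) + σ / m := by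
          rw [Finset.sum_const, Finset.card_range, nsmul_eq_mul]
          ring

  refine ⟨part1, ⟨2 * c ^ 2 / ν + σ, ?_⟩⟩
  intro n hn
  have hs0 : 0 < Real.sqrt n := Real.sqrt_pos.2 (by exact_mod_cast hn)
  have hs1 : 1 ≤ Real.sqrt n := by
    rw [show (1:ℝ) = Real.sqrt 1 by simp]
    exact Real.sqrt_le_sqrt (by exact_mod_cast hn)
  set m := ⌈Real.sqrt n⌉₊ with hmdef
  have hm1 : 1 ≤ m := Nat.one_le_ceil_iff.2 hs0
  have hmlb : Real.sqrt n ≤ (m : ℝ) := Nat.le_ceil _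
  have hmub : (m : ℝ) ≤ 2 * Real.sqrt n := by
    have h := Nat.ceil_lt_add_one (le_of_lt hs0)
    calc (m : ℝ) ≤ Real.sqrt n + 1 := le_of_lt h
      _ ≤ 2 * Real.sqrt n := by linarith
  have hnR : (0:ℝ) < n := by exact_mod_cast hn
  have hsq : Real.sqrt n * Real.sqrt n = (n : ℝ) := Real.mul_self_sqrt (le_of_lt hnR)
  refine le_trans (part1 n m hn hm1) ?_
  have h1 : c ^ 2 * m / (n * ν) ≤ (2 * c ^ 2 / ν) / Real.sqrt n := by
    have hnum : c ^ 2 * (m : ℝ) ≤ c ^ 2 * (2 * Real.sqrt n) :=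
      mul_le_mul_of_nonneg_left hmub (sq_nonneg c)
    calc c ^ 2 * (m : ℝ) / (n * ν) ≤ c ^ 2 * (2 * Real.sqrt n) / (n * ν) :=
          (div_le_div_iff_of_pos_right (by positivity)).2 hnum
      _ = (2 * c ^ 2 / ν) / Real.sqrt n := by
          rw [div_eq_div_iff (by positivity) (by positivity)]
          calc c ^ 2 * (2 * Real.sqrt n) * Real.sqrt n
              = 2 * c ^ 2 * (Real.sqrt n * Real.sqrt n) := by ring
            _ = 2 * c ^ 2 * (n : ℝ) := by rw [hsq]
            _ = 2 * c ^ 2 / ν * (n * ν) := by field_simp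
  have h2 : σ / m ≤ σ / Real.sqrt n := by
    apply div_le_div_of_nonneg_left (le_of_lt hσ) hs0
    exact hmlb
  calc c ^ 2 * m / (n * ν) + σ / m
      ≤ (2 * c ^ 2 / ν) / Real.sqrt n + σ / Real.sqrt n := add_le_add h1 h2
    _ = (2 * c ^ 2 / ν + σ) / Real.sqrt n := by rw [add_div]
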